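/- (Appendix B antipodality lemma.) Let n ≥ 2 and let {M_s}_{s∈{0,1}^n} be a POVM on ℂ^{2^n}. For any 2×2 density matrices ρ^{(j)}_{a|x} (j ∈ {1,…,n}, a, x ∈ {0,1}), there exist unit vectors ψ^{(j)}_{a|x} ∈ ℂ² with ⟨ψ^{(j)}_{0|x}, ψ^{(j)}_{1|x}⟩ = 0 for every j and x, such that Σ_{s∈{0,1}^n} Tr(M_s W̃_s) ≥ Σ_{s∈{0,1}^n} Tr(M_s W_s), where W_s is built from A^{(j)}_x = ρ^{(j)}_{0|x} − ρ^{(j)}_{1|x} and W̃_s from Ã^{(j)}_x = |ψ^{(j)}_{0|x}⟩⟨ψ^{(j)}_{0|x}| − |ψ^{(j)}_{1|x}⟩⟨ψ^{(j)}_{1|x}|. Consequently, for any fixed POVM, the supremum of the success metric S = (1/(2^n (n−1) 2√2)) Σ_s Tr(M_s W_s) over all density-matrix messages is attained on messages that are pure and pairwise orthogonal (antipodal) for each fixed j and x. -/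

import Mathlib

open Matrix Finset ComplexOrder

noncomputable section

/-- 2×2 complex matrices. -/
abbrev Mat2 := Matrix (Fin 2) (Fin 2) ℂ

/-- Tensor product of `n` 2×2 matrices, indexed by bit strings `Fin n → Fin 2`. -/
def tensorN (n : ℕ) (M : Fin n → Mat2) :
    Matrix (Fin n → Fin 2) (Fin n → Fin 2) ℂ :=
  Matrix.of fun f g => ∏ j, M j (f j) (g j)

/-- The operator `W_s` built from the observables `A^{(j)}_x`. -/
def Wop (n : ℕ) [NeZero n] (A : Fin n → Fin 2 → Mat2) (s : Fin n → Fin 2) :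
    Matrix (Fin n → Fin 2) (Fin n → Fin 2) ℂ :=
  (((n : ℂ) - 1) * (-1 : ℂ) ^ ((s 0 : ℕ))) •
      tensorN n (fun j => if j = 0 then A 0 0 + A 0 1 else A j 0)
    + ∑ j ∈ Finset.univ.filter (fun j : Fin n => j ≠ 0),
        ((-1 : ℂ) ^ ((s j : ℕ))) •
          tensorN n (fun k => if k = 0 then A 0 0 - A 0 1
            else if k = j then A j 1 else 1)

/-- The observables built from pure-state (unit-vector) preparations. -/
def Apure (n : ℕ) (ψ : Fin n → Fin 2 → Fin 2 → (Fin 2 → ℂ)) :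
    Fin n → Fin 2 → Mat2 :=
  fun j x => vecMulVec (ψ j 0 x) (star (ψ j 0 x)) - vecMulVec (ψ j 1 x) (star (ψ j 1 x))

/-! ### Auxiliary development -/

/-- rank-one projector -/
def P2 (ψ : Fin 2 → ℂ) : Mat2 := vecMulVec ψ (star ψ)

lemma P2_herm (ψ : Fin 2 → ℂ) : (P2 ψ).IsHermitian := by
  ext a b
  simp [P2, conjTranspose_apply, vecMulVec_apply, mul_comm]

/-- slot update of observables -/
def updS {n : ℕ} (A : Fin n → Fin 2 → Mat2) (j0 : Fin n) (x0 : Fin 2) (B : Mat2) :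
    Fin n → Fin 2 → Mat2 :=
  fun j x => if j = j0 ∧ x = x0 then B else A j x

lemma updS_self {n : ℕ} (A : Fin n → Fin 2 → Mat2) (j0 : Fin n) (x0 : Fin 2) :
    updS A j0 x0 (A j0 x0) = A := by
  funext j x
  simp only [updS]
  split
  · rename_i h; rw [h.1, h.2]
  · rfl

lemma prod_update_apply {n : ℕ} (M : Fin n → Mat2) (j0 : Fin n) (Z : Mat2)
    (f g : Fin n → Fin 2) :
    ∏ j, Function.update M j0 Z j (f j) (g j)
      = Z (f j0) (g j0) * ∏ j ∈ Finset.univ.erase j0, M j (f j) (g j) := by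
  rw [← Finset.mul_prod_erase Finset.univ _ (Finset.mem_univ j0), Function.update_self]
  congr 1
  exact Finset.prod_congr rfl fun j hj => by
    rw [Function.update_of_ne (Finset.mem_erase.mp hj).1]

lemma tensorN_update_comb {n : ℕ} (M : Fin n → Mat2) (j0 : Fin n) (a b : ℂ) (X Y : Mat2) :
    tensorN n (Function.update M j0 (a • X + b • Y))
      = a • tensorN n (Function.update M j0 X) + b • tensorN n (Function.update M j0 Y) := by
  ext f g
  simp only [tensorN, of_apply, prod_update_apply, Matrix.add_apply, Matrix.smul_apply,
    smul_eq_mul]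
  ring

/-- affinity of `tensorN` when the dependence on `B` is only in slot `j0`,
affinely. -/
lemma tensorN_affine {n : ℕ} (G : Mat2 → Fin n → Mat2) (j0 : Fin n)
    (hconst : ∀ B j, j ≠ j0 → G B j = G 0 j)
    (hslot : ∀ (a b : ℂ) (X Y : Mat2), a + b = 1 →
      G (a • X + b • Y) j0 = a • G X j0 + b • G Y j0)
    (a b : ℂ) (X Y : Mat2) (hab : a + b = 1) :
    tensorN n (G (a • X + b • Y)) = a • tensorN n (G X) + b • tensorN n (G Y) := by
  have hG : ∀ B, G B = Function.update (G 0) j0 (G B j0) := by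
    intro B; funext j
    by_cases h : j = j0
    · subst h; rw [Function.update_self]
    · rw [Function.update_of_ne h, hconst B j h]
  rw [hG (a • X + b • Y), hG X, hG Y, hslot a b X Y hab, tensorN_update_comb]

lemma smul_comb_add (a b : ℂ) (hab : a + b = 1) (X Y C : Mat2) :
    a • X + b • Y + C = a • (X + C) + b • (Y + C) := by
  rw [smul_add, smul_add, add_add_add_comm, ← add_smul, hab, one_smul]

lemma smul_comb_sub (a b : ℂ) (hab : a + b = 1) (X Y C : Mat2) :
    a • X + b • Y - C = a • (X - C) + b • (Y - C) := by
  match_scalars <;> first | ring1 | linear_combination hab | linear_combination -hab | linear_combination (2:ℂ)*hab | linear_combination (-2:ℂ)*hab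

lemma sub_smul_comb (a b : ℂ) (hab : a + b = 1) (X Y C : Mat2) :
    C - (a • X + b • Y) = a • (C - X) + b • (C - Y) := by
  match_scalars <;> first | ring1 | linear_combination hab | linear_combination -hab | linear_combination (2:ℂ)*hab | linear_combination (-2:ℂ)*hab

lemma comb_self {α : Type*} [AddCommMonoid α] [Module ℂ α] (a b : ℂ) (hab : a + b = 1)
    (T : α) : T = a • T + b • T := by
  rw [← add_smul, hab, one_smul]

@[simp] lemma updS_same {n : ℕ} (A : Fin n → Fin 2 → Mat2) (j0 : Fin n) (x0 : Fin 2) (B : Mat2) :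
    updS A j0 x0 B j0 x0 = B := by simp [updS]

lemma updS_ne_left {n : ℕ} (A : Fin n → Fin 2 → Mat2) {j j0 : Fin n} (x0 : Fin 2) (B : Mat2)
    (x : Fin 2) (h : j ≠ j0) : updS A j0 x0 B j x = A j x :=
  if_neg fun hh => h hh.1

lemma updS_ne_right {n : ℕ} (A : Fin n → Fin 2 → Mat2) (j0 : Fin n) {x x0 : Fin 2} (B : Mat2)
    (j : Fin n) (h : x ≠ x0) : updS A j0 x0 B j x = A j x :=
  if_neg fun hh => h hh.2

/-- first tensor term of `Wop` -/
def Tm1 (n : ℕ) [NeZero n] (D : Fin n → Fin 2 → Mat2) :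
    Matrix (Fin n → Fin 2) (Fin n → Fin 2) ℂ :=
  tensorN n (fun j => if j = 0 then D 0 0 + D 0 1 else D j 0)

/-- other tensor terms of `Wop` -/
def Tm2 (n : ℕ) [NeZero n] (D : Fin n → Fin 2 → Mat2) (j' : Fin n) :
    Matrix (Fin n → Fin 2) (Fin n → Fin 2) ℂ :=
  tensorN n (fun k => if k = 0 then D 0 0 - D 0 1 else if k = j' then D j' 1 else 1)

lemma Wop_eq (n : ℕ) [NeZero n] (A : Fin n → Fin 2 → Mat2) (s : Fin n → Fin 2) :
    Wop n A s = (((n : ℂ) - 1) * (-1 : ℂ) ^ ((s 0 : ℕ))) • Tm1 n A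
      + ∑ j ∈ Finset.univ.filter (fun j : Fin n => j ≠ 0),
          ((-1 : ℂ) ^ ((s j : ℕ))) • Tm2 n A j := rfl

lemma Wop_comb {n : ℕ} [NeZero n] (A B C : Fin n → Fin 2 → Mat2) (a b : ℂ)
    (s : Fin n → Fin 2)
    (h1 : Tm1 n A = a • Tm1 n B + b • Tm1 n C)
    (h2 : ∀ j : Fin n, j ≠ 0 → Tm2 n A j = a • Tm2 n B j + b • Tm2 n C j) :
    Wop n A s = a • Wop n B s + b • Wop n C s := by
  rw [Wop_eq, Wop_eq, Wop_eq, h1]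
  have hsum : ∑ j ∈ Finset.univ.filter (fun j : Fin n => j ≠ 0),
      ((-1 : ℂ) ^ ((s j : ℕ))) • Tm2 n A j
      = a • (∑ j ∈ Finset.univ.filter (fun j : Fin n => j ≠ 0),
          ((-1 : ℂ) ^ ((s j : ℕ))) • Tm2 n B j)
      + b • (∑ j ∈ Finset.univ.filter (fun j : Fin n => j ≠ 0),
          ((-1 : ℂ) ^ ((s j : ℕ))) • Tm2 n C j) := by
    rw [Finset.smul_sum, Finset.smul_sum, ← Finset.sum_add_distrib]
    refine Finset.sum_congr rfl fun j hj => ?_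
    rw [h2 j (by simpa using hj), smul_add, smul_comm _ a, smul_comm _ b]
  rw [hsum, smul_add, smul_comm _ a, smul_comm _ b, smul_add, smul_add]
  abel

lemma Wop_affine {n : ℕ} [NeZero n] (A : Fin n → Fin 2 → Mat2) (j0 : Fin n) (x0 : Fin 2)
    (a b : ℂ) (hab : a + b = 1) (X Y : Mat2) (s : Fin n → Fin 2) :
    Wop n (updS A j0 x0 (a • X + b • Y)) s
      = a • Wop n (updS A j0 x0 X) s + b • Wop n (updS A j0 x0 Y) s := by
  refine Wop_comb _ _ _ a b s ?_ ?_
  · -- Tm1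
    by_cases hj0 : j0 = 0
    · subst hj0
      show tensorN n _ = a • tensorN n _ + b • tensorN n _
      refine tensorN_affine
        (fun B => fun j => if j = 0 then updS A 0 x0 B 0 0 + updS A 0 x0 B 0 1
          else updS A 0 x0 B j 0) 0 ?_ ?_ a b X Y hab
      · intro B j hj
        simp only [if_neg hj, updS_ne_left A x0 _ _ hj]
      · intro a' b' X' Y' hab'
        simp only [if_pos rfl]
        by_cases hx0 : x0 = 0
        · subst hx0
          rw [updS_same, updS_same, updS_same, updS_ne_right A 0 _ _ (by decide),
            updS_ne_right A 0 _ _ (by decide), updS_ne_right A 0 _ _ (by decide)]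
          exact smul_comb_add a' b' hab' X' Y' (A 0 1)
        · have hx1 : x0 = 1 := by omega
          subst hx1
          have e2 : ∀ Z : Mat2, updS A 0 1 Z 0 0 = A 0 0 :=
            fun Z => if_neg (fun h => absurd h.2 (by decide))
          rw [updS_same, updS_same, updS_same, e2, e2, e2]
          rw [add_comm (A 0 0), add_comm (A 0 0), add_comm (A 0 0)]
          exact smul_comb_add a' b' hab' X' Y' (A 0 0)
    · by_cases hx0 : x0 = 0
      · subst hx0
        show tensorN n _ = a • tensorN n _ + b • tensorN n _
        refine tensorN_affine
          (fun B => fun j => if j = 0 then updS A j0 0 B 0 0 + updS A j0 0 B 0 1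
            else updS A j0 0 B j 0) j0 ?_ ?_ a b X Y hab
        · intro B j hj
          by_cases h0 : j = 0
          · subst h0
            simp only [if_pos rfl, updS_ne_left A _ _ _ (Ne.symm hj0),
              updS_ne_left A _ _ _ (Ne.symm hj0)]
          · simp only [if_neg h0, updS_ne_left A _ _ _ hj]
        · intro a' b' X' Y' hab'
          simp only [if_neg hj0, updS_same]
      · have hx1 : x0 = 1 := by omega
        subst hx1
        -- constant in B
        have hcst : ∀ B : Mat2, Tm1 n (updS A j0 1 B) = Tm1 n A := by
          intro B
          unfold Tm1
          refine congrArg (tensorN n) (funext fun j => ?_)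
          by_cases h0 : j = 0
          · subst h0
            rw [if_pos rfl, if_pos rfl, updS_ne_left A _ _ _ (Ne.symm hj0),
              updS_ne_left A _ _ _ (Ne.symm hj0)]
          · rw [if_neg h0, if_neg h0, updS_ne_right A j0 _ _ (by decide)]
        rw [hcst, hcst, hcst]
        exact comb_self a b hab _
  · -- Tm2
    intro j' hj'
    by_cases hj0 : j0 = 0
    · subst hj0
      show tensorN n _ = a • tensorN n _ + b • tensorN n _
      refine tensorN_affine
        (fun B => fun k => if k = 0 then updS A 0 x0 B 0 0 - updS A 0 x0 B 0 1
          else if k = j' then updS A 0 x0 B j' 1 else 1) 0 ?_ ?_ a b X Y hab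
      · intro B k hk
        simp only [if_neg hk]
        by_cases hkj : k = j'
        · simp only [if_pos hkj, updS_ne_left A _ _ _ hj']
        · simp only [if_neg hkj]
      · intro a' b' X' Y' hab'
        simp only [if_pos rfl]
        by_cases hx0 : x0 = 0
        · subst hx0
          rw [updS_same, updS_same, updS_same, updS_ne_right A 0 _ _ (by decide),
            updS_ne_right A 0 _ _ (by decide), updS_ne_right A 0 _ _ (by decide)]
          exact smul_comb_sub a' b' hab' X' Y' (A 0 1)
        · have hx1 : x0 = 1 := by omega
          subst hx1
          have e2 : ∀ Z : Mat2, updS A 0 1 Z 0 0 = A 0 0 :=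
            fun Z => if_neg (fun h => absurd h.2 (by decide))
          rw [updS_same, updS_same, updS_same, e2, e2, e2]
          exact sub_smul_comb a' b' hab' X' Y' (A 0 0)
    · by_cases hc : x0 = 1 ∧ j' = j0
      · obtain ⟨hx1, hjj⟩ := hc
        subst hx1; subst hjj
        show tensorN n _ = a • tensorN n _ + b • tensorN n _
        refine tensorN_affine
          (fun B => fun k => if k = 0 then updS A j' 1 B 0 0 - updS A j' 1 B 0 1
            else if k = j' then updS A j' 1 B j' 1 else 1) j' ?_ ?_ a b X Y hab
        · intro B k hk
          by_cases h0 : k = 0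
          · subst h0
            rw [if_pos rfl, if_pos rfl, updS_ne_left A _ _ _ (Ne.symm hj0),
              updS_ne_left A _ _ _ (Ne.symm hj0), updS_ne_left A _ _ _ (Ne.symm hj0),
              updS_ne_left A _ _ _ (Ne.symm hj0)]
          · rw [if_neg h0, if_neg h0, if_neg hk, if_neg hk]
        · intro a' b' X' Y' hab'
          rw [if_neg hj0, if_neg hj0, if_neg hj0, if_pos rfl, if_pos rfl, if_pos rfl,
            updS_same, updS_same, updS_same]
      · -- constant in B
        have hcst : ∀ B : Mat2, Tm2 n (updS A j0 x0 B) j' = Tm2 n A j' := by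
          intro B
          unfold Tm2
          refine congrArg (tensorN n) (funext fun k => ?_)
          by_cases h0 : k = 0
          · subst h0
            rw [if_pos rfl, if_pos rfl, updS_ne_left A _ _ _ (Ne.symm hj0),
              updS_ne_left A _ _ _ (Ne.symm hj0)]
          · rw [if_neg h0, if_neg h0]
            by_cases hkj : k = j'
            · rw [if_pos hkj, if_pos hkj]
              rcases (show x0 = 0 ∨ x0 = 1 by omega) with hx | hx
              · subst hx
                rw [updS_ne_right A j0 _ _ (by decide)]
              · subst hx
                have : j' ≠ j0 := fun h => hc ⟨rfl, h⟩
                rw [updS_ne_left A _ _ _ this]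
            · rw [if_neg hkj, if_neg hkj]
        rw [hcst, hcst, hcst]
        exact comb_self a b hab _

/-- the success functional -/
def Fval {n : ℕ} [NeZero n] (M : (Fin n → Fin 2) → Matrix (Fin n → Fin 2) (Fin n → Fin 2) ℂ)
    (A : Fin n → Fin 2 → Mat2) : ℂ :=
  ∑ s, (M s * Wop n A s).trace

lemma Fval_affine {n : ℕ} [NeZero n]
    (M : (Fin n → Fin 2) → Matrix (Fin n → Fin 2) (Fin n → Fin 2) ℂ)
    (A : Fin n → Fin 2 → Mat2) (j0 : Fin n) (x0 : Fin 2)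
    (a b : ℂ) (hab : a + b = 1) (X Y : Mat2) :
    Fval M (updS A j0 x0 (a • X + b • Y))
      = a * Fval M (updS A j0 x0 X) + b * Fval M (updS A j0 x0 Y) := by
  unfold Fval
  rw [Finset.mul_sum, Finset.mul_sum, ← Finset.sum_add_distrib]
  refine Finset.sum_congr rfl fun s _ => ?_
  rw [Wop_affine A j0 x0 a b hab X Y s, mul_add, mul_smul_comm, mul_smul_comm,
    trace_add, trace_smul, trace_smul, smul_eq_mul, smul_eq_mul]

lemma tensorN_herm {n : ℕ} (M : Fin n → Mat2) (h : ∀ j, (M j).IsHermitian) :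
    (tensorN n M).IsHermitian := by
  refine Matrix.ext fun f g => ?_
  simp only [conjTranspose_apply, tensorN, of_apply, star_prod]
  refine Finset.prod_congr rfl fun j _ => ?_
  have := h j
  calc star (M j (g j) (f j)) = (M j)ᴴ (f j) (g j) := rfl
    _ = M j (f j) (g j) := by rw [this]

lemma herm_smul {m : Type*} [Fintype m] {c : ℂ} (hc : star c = c)
    {T : Matrix m m ℂ} (hT : T.IsHermitian) : (c • T).IsHermitian := by
  rw [IsHermitian, conjTranspose_smul, hc, hT]

lemma Wop_herm {n : ℕ} [NeZero n] (A : Fin n → Fin 2 → Mat2)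
    (hA : ∀ j x, (A j x).IsHermitian) (s : Fin n → Fin 2) :
    (Wop n A s).IsHermitian := by
  rw [Wop_eq]
  refine IsHermitian.add (herm_smul (by simp) ?_) ?_
  · refine tensorN_herm _ fun j => ?_
    by_cases h0 : j = 0
    · subst h0; rw [if_pos rfl]; exact (hA 0 0).add (hA 0 1)
    · rw [if_neg h0]; exact hA j 0
  · rw [IsHermitian, conjTranspose_sum]
    refine Finset.sum_congr rfl fun j _ => ?_
    refine herm_smul (by simp) ?_
    refine tensorN_herm _ fun k => ?_
    by_cases h0 : k = 0
    · subst h0; rw [if_pos rfl]; exact (hA 0 0).sub (hA 0 1)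
    · rw [if_neg h0]
      by_cases hkj : k = j
      · rw [if_pos hkj]; subst hkj; exact hA k 1
      · rw [if_neg hkj]; exact isHermitian_one

lemma Fval_real {n : ℕ} [NeZero n]
    (M : (Fin n → Fin 2) → Matrix (Fin n → Fin 2) (Fin n → Fin 2) ℂ)
    (hM : ∀ s, (M s).IsHermitian)
    (A : Fin n → Fin 2 → Mat2) (hA : ∀ j x, (A j x).IsHermitian) :
    ∃ r : ℝ, Fval M A = (r : ℂ) := by
  have key : (starRingEnd ℂ) (Fval M A) = Fval M A := by
    unfold Fval
    rw [map_sum]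
    refine Finset.sum_congr rfl fun s _ => ?_
    have h1 : (starRingEnd ℂ) ((M s * Wop n A s).trace) = ((M s * Wop n A s)ᴴ).trace := by
      rw [trace_conjTranspose]; rfl
    rw [h1, conjTranspose_mul, (hM s), (Wop_herm A hA s), trace_mul_comm]
  obtain ⟨r, hr⟩ := Complex.conj_eq_iff_real.mp key
  exact ⟨r, hr⟩

lemma trace_P2 (v : Fin 2 → ℂ) : (P2 v).trace = star v ⬝ᵥ v := by
  simp [P2, Matrix.trace, Matrix.diag, vecMulVec_apply, dotProduct, Fin.sum_univ_two,
    Pi.star_apply]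
  ring

lemma trace_mul_P2 (ρ : Mat2) (v : Fin 2 → ℂ) :
    (ρ * P2 v).trace = star v ⬝ᵥ (ρ *ᵥ v) := by
  simp [P2, Matrix.trace, Matrix.diag, mul_apply, vecMulVec_apply, dotProduct, mulVec,
    Fin.sum_univ_two, Pi.star_apply]
  ring

lemma quad_P2 (u w z : Fin 2 → ℂ) :
    star u ⬝ᵥ (P2 w *ᵥ z) = (star u ⬝ᵥ w) * (star w ⬝ᵥ z) := by
  simp [P2, dotProduct, mulVec, vecMulVec_apply, Fin.sum_univ_two, Pi.star_apply]
  ring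

lemma quad_le_one (ρ : Mat2) (hρ : ρ.PosSemidef) (htr : ρ.trace = 1) (x : Fin 2 → ℂ)
    (hx : star x ⬝ᵥ x = 1) : star x ⬝ᵥ (ρ *ᵥ x) ≤ 1 := by
  set y : Fin 2 → ℂ := ![-(starRingEnd ℂ) (x 1), (starRingEnd ℂ) (x 0)] with hy
  have hx' : (starRingEnd ℂ) (x 0) * x 0 + (starRingEnd ℂ) (x 1) * x 1 = 1 := by
    simpa [dotProduct, Fin.sum_univ_two, Pi.star_apply] using hx
  have hcomp : P2 x + P2 y = 1 := by
    ext a b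
    fin_cases a <;> fin_cases b <;>
      simp [P2, Matrix.add_apply, vecMulVec_apply, Matrix.one_apply, Pi.star_apply] <;> simp [hy] <;>
      ring_nf <;>
      linear_combination hx'
  have hsum : star x ⬝ᵥ (ρ *ᵥ x) + star y ⬝ᵥ (ρ *ᵥ y) = 1 := by
    have h := congrArg (fun Q => (ρ * Q).trace) hcomp
    simpa [mul_add, trace_add, trace_mul_P2, htr] using h
  have h0y : 0 ≤ star y ⬝ᵥ (ρ *ᵥ y) := hρ.dotProduct_mulVec_nonneg y
  have : star x ⬝ᵥ (ρ *ᵥ x) = 1 - star y ⬝ᵥ (ρ *ᵥ y) := by rw [← hsum]; ring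
  rw [this]
  exact sub_le_self _ h0y

lemma herm_spectral (T : Mat2) (hT : T.IsHermitian) :
    T = ∑ i, (hT.eigenvalues i : ℂ) •
      P2 (fun a => (hT.eigenvectorUnitary : Mat2) a i) := by
  conv_lhs => rw [hT.spectral_theorem, Unitary.conjStarAlgAut_apply]
  ext a b
  simp only [mul_apply, mul_diagonal, Function.comp_apply, Matrix.sum_apply,
    Matrix.smul_apply, P2, vecMulVec_apply, Matrix.star_apply, smul_eq_mul,
    Fin.sum_univ_two, Pi.star_apply, Matrix.diagonal_apply]
  norm_num
  ring

lemma density_diff_decomp (ρ0 ρ1 : Mat2) (h0 : ρ0.PosSemidef) (h1 : ρ1.PosSemidef)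
    (t0 : ρ0.trace = 1) (t1 : ρ1.trace = 1) :
    ∃ (t : ℝ) (φ : Fin 2 → Fin 2 → ℂ), 0 ≤ t ∧ t ≤ 1 ∧
      (∀ a, star (φ a) ⬝ᵥ φ a = 1) ∧ (star (φ 0) ⬝ᵥ φ 1 = 0) ∧ (star (φ 1) ⬝ᵥ φ 0 = 0) ∧
      ρ0 - ρ1 = (t : ℂ) • (P2 (φ 0) - P2 (φ 1)) := by
  have hT : (ρ0 - ρ1).IsHermitian := h0.1.sub h1.1
  set v : Fin 2 → Fin 2 → ℂ := fun i a => (hT.eigenvectorUnitary : Mat2) a i with hv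
  have hu : (star (hT.eigenvectorUnitary : Mat2)) * (hT.eigenvectorUnitary : Mat2) = 1 :=
    Unitary.coe_star_mul_self hT.eigenvectorUnitary
  have horth : ∀ k l, star (v k) ⬝ᵥ v l = if k = l then 1 else 0 := by
    intro k l
    have e : star (v k) ⬝ᵥ v l
        = ((star (hT.eigenvectorUnitary : Mat2)) * (hT.eigenvectorUnitary : Mat2)) k l := by
      simp [dotProduct, mul_apply, Matrix.star_apply, hv, Pi.star_apply]
    rw [e, hu, Matrix.one_apply]
  have hunit : ∀ k, star (v k) ⬝ᵥ v k = 1 := fun k => by rw [horth k k, if_pos rfl]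
  have hdec : ρ0 - ρ1 = ∑ i, (hT.eigenvalues i : ℂ) • P2 (v i) := herm_spectral _ hT
  have htrT : (ρ0 - ρ1).trace = 0 := by rw [trace_sub, t0, t1, sub_self]
  have hsumeig : (hT.eigenvalues 0 : ℂ) + (hT.eigenvalues 1 : ℂ) = 0 := by
    have h := congrArg Matrix.trace hdec
    rw [htrT] at h
    rw [Fin.sum_univ_two, trace_add, trace_smul, trace_smul, trace_P2, trace_P2,
      hunit 0, hunit 1] at h
    simpa using h.symm
  have hlam : hT.eigenvalues 1 = - hT.eigenvalues 0 := by
    have : ((hT.eigenvalues 0 + hT.eigenvalues 1 : ℝ) : ℂ) = 0 := by push_cast; exact hsumeig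
    have := Complex.ofReal_eq_zero.mp this
    linarith
  have hTe : ρ0 - ρ1 = (hT.eigenvalues 0 : ℂ) • (P2 (v 0) - P2 (v 1)) := by
    conv_lhs => rw [hdec]
    rw [Fin.sum_univ_two, hlam]
    push_cast
    module
  -- eigenvalue as quadratic form
  have hq : star (v 0) ⬝ᵥ ((ρ0 - ρ1) *ᵥ v 0) = (hT.eigenvalues 0 : ℂ) := by
    conv_lhs => rw [hTe]
    rw [smul_mulVec, sub_mulVec, dotProduct_smul, dotProduct_sub,
      quad_P2, quad_P2, hunit 0, horth 0 1]
    norm_num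
  have hq' : star (v 0) ⬝ᵥ ((ρ0 - ρ1) *ᵥ v 0)
      = star (v 0) ⬝ᵥ (ρ0 *ᵥ v 0) - star (v 0) ⬝ᵥ (ρ1 *ᵥ v 0) := by
    rw [sub_mulVec, dotProduct_sub]
  have hb0 : (0:ℂ) ≤ star (v 0) ⬝ᵥ (ρ0 *ᵥ v 0) := h0.dotProduct_mulVec_nonneg (v 0)
  have hb1 : (0:ℂ) ≤ star (v 0) ⬝ᵥ (ρ1 *ᵥ v 0) := h1.dotProduct_mulVec_nonneg (v 0)
  have hu0 : star (v 0) ⬝ᵥ (ρ0 *ᵥ v 0) ≤ 1 := quad_le_one ρ0 h0 t0 (v 0) (hunit 0)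
  have hu1 : star (v 0) ⬝ᵥ (ρ1 *ᵥ v 0) ≤ 1 := quad_le_one ρ1 h1 t1 (v 0) (hunit 0)
  have hle : (hT.eigenvalues 0 : ℂ) ≤ ((1:ℝ) : ℂ) := by
    rw [← hq, hq']
    push_cast
    calc star (v 0) ⬝ᵥ (ρ0 *ᵥ v 0) - star (v 0) ⬝ᵥ (ρ1 *ᵥ v 0)
        ≤ 1 - 0 := sub_le_sub hu0 hb1
      _ = 1 := by ring
  have hge : ((-1:ℝ) : ℂ) ≤ (hT.eigenvalues 0 : ℂ) := by
    rw [← hq, hq']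
    push_cast
    calc (-1 : ℂ) = 0 - 1 := by ring
      _ ≤ star (v 0) ⬝ᵥ (ρ0 *ᵥ v 0) - star (v 0) ⬝ᵥ (ρ1 *ᵥ v 0) := sub_le_sub hb0 hu1
  have hle' : hT.eigenvalues 0 ≤ 1 := Complex.real_le_real.mp hle
  have hge' : -1 ≤ hT.eigenvalues 0 := Complex.real_le_real.mp hge
  rcases le_or_gt 0 (hT.eigenvalues 0) with hpos | hneg
  · refine ⟨hT.eigenvalues 0, ![v 0, v 1], hpos, hle', ?_, ?_, ?_, ?_⟩
    · intro a; fin_cases a <;> simpa using hunit _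
    · simpa using horth 0 1
    · simpa using horth 1 0
    · simpa using hTe
  · refine ⟨-hT.eigenvalues 0, ![v 1, v 0], by linarith, by linarith, ?_, ?_, ?_, ?_⟩
    · intro a; fin_cases a <;> simpa using hunit _
    · simpa using horth 1 0
    · simpa using horth 0 1
    · simp only [Matrix.cons_val_zero, Matrix.cons_val_one, Matrix.head_cons]
      conv_lhs => rw [hTe]
      push_cast
      module

/-- standard basis vectors -/
def stdv (a : Fin 2) : Fin 2 → ℂ := fun b => if b = a then 1 else 0

lemma stdv_unit (a : Fin 2) : star (stdv a) ⬝ᵥ stdv a = 1 := by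
  fin_cases a <;> simp [stdv, dotProduct, Fin.sum_univ_two]

lemma stdv_orth01 : star (stdv 0) ⬝ᵥ stdv 1 = 0 := by
  simp [stdv, dotProduct, Fin.sum_univ_two]

lemma stdv_orth10 : star (stdv 1) ⬝ᵥ stdv 0 = 0 := by
  simp [stdv, dotProduct, Fin.sum_univ_two]

/-- the "good messages" predicate -/
def GoodPsi {n : ℕ} (ψ : Fin n → Fin 2 → Fin 2 → (Fin 2 → ℂ)) : Prop :=
  (∀ j a x, star (ψ j a x) ⬝ᵥ ψ j a x = 1) ∧ (∀ j x, star (ψ j 0 x) ⬝ᵥ ψ j 1 x = 0) ∧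
    (∀ j x, star (ψ j 1 x) ⬝ᵥ ψ j 0 x = 0)

/-- partially purified configuration -/
def cfg {n : ℕ} (ψ : Fin n → Fin 2 → Fin 2 → (Fin 2 → ℂ)) (A : Fin n → Fin 2 → Mat2)
    (S : Finset (Fin n × Fin 2)) : Fin n → Fin 2 → Mat2 :=
  fun j x => if (j, x) ∈ S then P2 (ψ j 0 x) - P2 (ψ j 1 x) else A j x

lemma cfg_herm {n : ℕ} (ψ : Fin n → Fin 2 → Fin 2 → (Fin 2 → ℂ)) (A : Fin n → Fin 2 → Mat2)
    (S : Finset (Fin n × Fin 2)) (hA : ∀ j x, (A j x).IsHermitian) :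
    ∀ j x, (cfg ψ A S j x).IsHermitian := by
  intro j x
  unfold cfg
  split
  · exact (P2_herm _).sub (P2_herm _)
  · exact hA j x

/-- decomposability of observables into eigen-projector form -/
def Decomp {n : ℕ} (A : Fin n → Fin 2 → Mat2) : Prop :=
  ∀ j x, ∃ (t : ℝ) (φ : Fin 2 → Fin 2 → ℂ), 0 ≤ t ∧ t ≤ 1 ∧
    (∀ a, star (φ a) ⬝ᵥ φ a = 1) ∧ (star (φ 0) ⬝ᵥ φ 1 = 0) ∧ (star (φ 1) ⬝ᵥ φ 0 = 0) ∧
    A j x = (t : ℂ) • (P2 (φ 0) - P2 (φ 1))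

lemma Decomp.herm {n : ℕ} {A : Fin n → Fin 2 → Mat2} (h : Decomp A) :
    ∀ j x, (A j x).IsHermitian := by
  intro j x
  obtain ⟨t, φ, -, -, -, -, -, hAeq⟩ := h j x
  rw [hAeq]
  exact herm_smul (by simp) ((P2_herm _).sub (P2_herm _))

lemma exists_pure_ge {n : ℕ} [NeZero n]
    (M : (Fin n → Fin 2) → Matrix (Fin n → Fin 2) (Fin n → Fin 2) ℂ)
    (hM : ∀ s, (M s).IsHermitian)
    (A : Fin n → Fin 2 → Mat2) (hdc : Decomp A) (S : Finset (Fin n × Fin 2)) :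
    ∃ ψ : Fin n → Fin 2 → Fin 2 → (Fin 2 → ℂ),
      GoodPsi ψ ∧ Fval M A ≤ Fval M (cfg ψ A S) := by
  classical
  induction S using Finset.induction_on with
  | empty =>
    refine ⟨fun j a x => stdv a, ⟨fun j a x => stdv_unit a, fun j x => stdv_orth01,
      fun j x => stdv_orth10⟩, ?_⟩
    have : cfg (fun j a x => stdv a) A ∅ = A := by funext j x; simp [cfg]
    rw [this]
  | @insert p S hp ih =>
    obtain ⟨ψ, hψ, hle⟩ := ih
    obtain ⟨j0, x0⟩ := p
    obtain ⟨t, φ, ht0, ht1, hφu, hφ01, hφ10, hAeq⟩ := hdc j0 x0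
    set C := cfg ψ A S with hCdef
    have hCherm : ∀ j x, (C j x).IsHermitian := cfg_herm ψ A S hdc.herm
    have hC0 : C j0 x0 = A j0 x0 := if_neg hp
    set e1 := P2 (φ 0) - P2 (φ 1) with he1
    set e2 := P2 (stdv 0) - P2 (stdv 1) with he2
    set e3 := P2 (stdv 1) - P2 (stdv 0) with he3
    -- reality of candidate values
    have hreal : ∀ e : Mat2, e.IsHermitian →
        ∃ r : ℝ, Fval M (updS C j0 x0 e) = (r : ℂ) := by
      intro e he
      refine Fval_real M hM _ fun j x => ?_
      unfold updS
      split
      · exact he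
      · exact hCherm j x
    obtain ⟨r1, hr1⟩ := hreal e1 ((P2_herm _).sub (P2_herm _))
    obtain ⟨r2, hr2⟩ := hreal e2 ((P2_herm _).sub (P2_herm _))
    obtain ⟨r3, hr3⟩ := hreal e3 ((P2_herm _).sub (P2_herm _))
    -- affine decomposition of the value at the current slot
    have hcomb1 : A j0 x0 = ((t : ℂ)) • e1 + (((1 - t : ℝ)) : ℂ) • (0 : Mat2) := by
      rw [hAeq, smul_zero, add_zero]
    have hzero : (0 : Mat2) = ((1/2 : ℂ)) • e2 + ((1/2 : ℂ)) • e3 := by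
      rw [he2, he3]; module
    have hg1 : Fval M (updS C j0 x0 (A j0 x0))
        = (t : ℂ) * Fval M (updS C j0 x0 e1) + ((1 - t : ℝ) : ℂ) * Fval M (updS C j0 x0 0) := by
      rw [hcomb1]
      exact Fval_affine M C j0 x0 _ _ (by push_cast; ring) e1 0
    have hg0 : Fval M (updS C j0 x0 (0 : Mat2))
        = (1/2 : ℂ) * Fval M (updS C j0 x0 e2) + (1/2 : ℂ) * Fval M (updS C j0 x0 e3) := by
      conv_lhs => rw [hzero]
      exact Fval_affine M C j0 x0 _ _ (by norm_num) e2 e3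
    have hFC : Fval M C = Fval M (updS C j0 x0 (A j0 x0)) := by rw [← hC0, updS_self]
    have hFCval : Fval M C = ((t * r1 + (1 - t) * (r2/2 + r3/2) : ℝ) : ℂ) := by
      rw [hFC, hg1, hg0, hr1, hr2, hr3]
      push_cast
      ring
    -- choose the best candidate
    set m := max r1 (max r2 r3) with hm
    have hm1 : r1 ≤ m := le_max_left _ _
    have hm2 : r2 ≤ m := le_trans (le_max_left _ _) (le_max_right _ _)
    have hm3 : r3 ≤ m := le_trans (le_max_right _ _) (le_max_right _ _)
    have hRle : t * r1 + (1 - t) * (r2/2 + r3/2) ≤ m := by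
      have h1t : (0:ℝ) ≤ 1 - t := by linarith
      have e1' : t * r1 ≤ t * m := mul_le_mul_of_nonneg_left hm1 ht0
      have e2' : (1 - t) * (r2/2 + r3/2) ≤ (1 - t) * m :=
        mul_le_mul_of_nonneg_left (by linarith) h1t
      nlinarith
    have hchoice : ∃ χ : Fin 2 → Fin 2 → ℂ,
        (∀ a, star (χ a) ⬝ᵥ χ a = 1) ∧ (star (χ 0) ⬝ᵥ χ 1 = 0) ∧ (star (χ 1) ⬝ᵥ χ 0 = 0) ∧
        Fval M (updS C j0 x0 (P2 (χ 0) - P2 (χ 1))) = (m : ℂ) := by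
      rcases max_choice r1 (max r2 r3) with hmc | hmc
      · exact ⟨φ, hφu, hφ01, hφ10, by rw [← he1, hr1, hm, hmc]⟩
      · rcases max_choice r2 r3 with hmc' | hmc'
        · refine ⟨stdv, fun a => stdv_unit a, stdv_orth01, stdv_orth10, ?_⟩
          rw [← he2, hr2, hm, hmc, hmc']
        · refine ⟨![stdv 1, stdv 0], ?_, ?_, ?_, ?_⟩
          · intro a; fin_cases a
            · simpa using stdv_unit 1
            · simpa using stdv_unit 0
          · simpa using stdv_orth10
          · simpa using stdv_orth01
          · have : P2 (![stdv 1, stdv 0] 0) - P2 (![stdv 1, stdv 0] 1) = e3 := by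
              simp [he3]
            rw [this, hr3, hm, hmc, hmc']
    obtain ⟨χ, hχu, hχ01, hχ10, hχval⟩ := hchoice
    refine ⟨fun j a x => if j = j0 ∧ x = x0 then χ a else ψ j a x, ?_, ?_⟩
    · refine ⟨fun j a x => ?_, fun j x => ?_, fun j x => ?_⟩ <;> dsimp only <;> split
      · exact hχu a
      · exact hψ.1 j a x
      · exact hχ01
      · exact hψ.2.1 j x
      · exact hχ10
      · exact hψ.2.2 j x
    · have hcfg : updS C j0 x0 (P2 (χ 0) - P2 (χ 1))
          = cfg (fun j a x => if j = j0 ∧ x = x0 then χ a else ψ j a x) A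
              (insert (j0, x0) S) := by
        funext j x
        by_cases h : j = j0 ∧ x = x0
        · obtain ⟨rfl, rfl⟩ := h
          rw [updS_same]
          have hmem : (j, x) ∈ insert (j, x) S := Finset.mem_insert_self _ _
          simp only [cfg, if_pos hmem]
          simp
        · have hne : (j, x) ≠ (j0, x0) := fun he =>
            h ⟨congrArg Prod.fst he, congrArg Prod.snd he⟩
          have : updS C j0 x0 (P2 (χ 0) - P2 (χ 1)) j x = C j x := if_neg h
          rw [this]
          simp only [hCdef, cfg, Finset.mem_insert, hne, false_or, if_neg h]
        -- both sides are the same if-expression now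
      calc Fval M A ≤ Fval M C := hle
        _ = ((t * r1 + (1 - t) * (r2/2 + r3/2) : ℝ) : ℂ) := hFCval
        _ ≤ (m : ℂ) := Complex.real_le_real.mpr hRle
        _ = Fval M (updS C j0 x0 (P2 (χ 0) - P2 (χ 1))) := hχval.symm
        _ = _ := by rw [hcfg]

section Continuity

variable {X : Type*} [TopologicalSpace X]

lemma cont_entry_of {F : X → Mat2} (hF : Continuous F) (c d : Fin 2) :
    Continuous fun x => F x c d :=
  (continuous_apply d).comp ((continuous_apply c).comp hF)

lemma cont_tensorN {n : ℕ} (G : X → Fin n → Mat2)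
    (hG : ∀ j, Continuous fun x => G x j) :
    Continuous fun x => tensorN n (G x) := by
  apply continuous_matrix
  intro f g
  show Continuous fun x => ∏ j, G x j (f j) (g j)
  exact continuous_finset_prod _ fun j _ => cont_entry_of (hG j) _ _

lemma cont_Wop {n : ℕ} [NeZero n] (A : X → Fin n → Fin 2 → Mat2)
    (hA : ∀ j x, Continuous fun ρ => A ρ j x) (s : Fin n → Fin 2) :
    Continuous fun ρ => Wop n (A ρ) s := by
  simp only [Wop_eq]
  apply Continuous.add
  · refine Continuous.fun_const_smul (cont_tensorN _ fun j => ?_) _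
    by_cases h0 : j = 0
    · subst h0
      simp only [if_pos rfl]
      exact (hA 0 0).add (hA 0 1)
    · simp only [if_neg h0]
      exact hA j 0
  · refine continuous_finset_sum _ fun j _ => ?_
    refine Continuous.fun_const_smul (cont_tensorN _ fun k => ?_) _
    by_cases h0 : k = 0
    · subst h0
      simp only [if_pos rfl]
      exact (hA 0 0).sub (hA 0 1)
    · simp only [if_neg h0]
      by_cases hkj : k = j
      · subst hkj
        simp only [if_pos rfl]
        exact hA k 1
      · simp only [if_neg hkj]
        exact continuous_const

lemma cont_Fval {n : ℕ} [NeZero n]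
    (M : (Fin n → Fin 2) → Matrix (Fin n → Fin 2) (Fin n → Fin 2) ℂ)
    (A : X → Fin n → Fin 2 → Mat2) (hA : ∀ j x, Continuous fun ρ => A ρ j x) :
    Continuous fun ρ => Fval M (A ρ) := by
  unfold Fval
  refine continuous_finset_sum _ fun s _ => ?_
  exact (Continuous.matrix_mul continuous_const (cont_Wop A hA s)).matrix_trace

end Continuity

lemma cont_diff_slots {n : ℕ} :
    ∀ (j : Fin n) (x : Fin 2), Continuous fun ρ : Fin n → Fin 2 → Fin 2 → Mat2 =>
      ρ j 0 x - ρ j 1 x := by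
  intro j x
  have h : ∀ a : Fin 2, Continuous fun ρ : Fin n → Fin 2 → Fin 2 → Mat2 => ρ j a x :=
    fun a => (continuous_apply x).comp ((continuous_apply a).comp (continuous_apply j))
  exact (h 0).sub (h 1)

lemma cont_quad (x : Fin 2 → ℂ) :
    Continuous fun m : Mat2 => star x ⬝ᵥ (m *ᵥ x) := by
  simp only [dotProduct, mulVec]
  refine continuous_finset_sum _ fun a _ => ?_
  refine Continuous.mul continuous_const ?_
  refine continuous_finset_sum _ fun b _ => ?_
  exact (cont_entry_of continuous_id a b).mul continuous_const

lemma isClosed_nonnegC : IsClosed {z : ℂ | 0 ≤ z} := by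
  have h : {z : ℂ | 0 ≤ z} = Complex.re ⁻¹' (Set.Ici 0) ∩ Complex.im ⁻¹' {0} := by
    ext z
    simp [Complex.le_def, eq_comm]
  rw [h]
  exact (isClosed_Ici.preimage Complex.continuous_re).inter
    (isClosed_singleton.preimage Complex.continuous_im)

lemma isClosed_K : IsClosed {m : Mat2 | m.PosSemidef ∧ m.trace = 1} := by
  have h1 : IsClosed {m : Mat2 | m.IsHermitian} := by
    have : {m : Mat2 | m.IsHermitian} = {m : Mat2 | mᴴ = m} := rfl
    rw [this]
    exact isClosed_eq (Continuous.matrix_conjTranspose continuous_id) continuous_id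
  have h2 : IsClosed {m : Mat2 | ∀ x, 0 ≤ star x ⬝ᵥ (m *ᵥ x)} := by
    have : {m : Mat2 | ∀ x, 0 ≤ star x ⬝ᵥ (m *ᵥ x)}
        = ⋂ x, {m : Mat2 | 0 ≤ star x ⬝ᵥ (m *ᵥ x)} := by
      ext m; simp
    rw [this]
    exact isClosed_iInter fun x => isClosed_nonnegC.preimage (cont_quad x)
  have h3 : IsClosed {m : Mat2 | m.trace = 1} :=
    isClosed_eq (Continuous.matrix_trace continuous_id) continuous_const
  have : {m : Mat2 | m.PosSemidef ∧ m.trace = 1}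
      = ({m : Mat2 | m.IsHermitian} ∩ {m : Mat2 | ∀ x, 0 ≤ star x ⬝ᵥ (m *ᵥ x)})
        ∩ {m : Mat2 | m.trace = 1} := by
    ext m
    simp only [Set.mem_setOf_eq, Set.mem_inter_iff, posSemidef_iff_dotProduct_mulVec]
  rw [this]
  exact (h1.inter h2).inter h3

lemma density_entry_bound (m : Mat2) (h : m.PosSemidef) (ht : m.trace = 1) :
    ∀ a b, ‖m a b‖ ≤ 1 := by
  have htr' : m 0 0 + m 1 1 = 1 := by
    simpa [Matrix.trace, Fin.sum_univ_two] using ht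
  have hdiag0 : ∀ c : Fin 2, (0 : ℂ) ≤ m c c := by
    intro c
    have := h.dotProduct_mulVec_nonneg (stdv c)
    have e : star (stdv c) ⬝ᵥ (m *ᵥ stdv c) = m c c := by
      fin_cases c <;> simp [stdv, dotProduct, mulVec, Fin.sum_univ_two]
    rwa [e] at this
  have hdiag_re : ∀ c : Fin 2, m c c = ((m c c).re : ℂ) ∧ 0 ≤ (m c c).re := by
    intro c
    obtain ⟨hre, him⟩ := Complex.le_def.mp (hdiag0 c)
    refine ⟨?_, by simpa using hre⟩
    apply Complex.ext
    · rfl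
    · simp only [Complex.ofReal_im]
      simpa using him.symm
  have hsumre : (m 0 0).re + (m 1 1).re = 1 := by
    have := congrArg Complex.re htr'
    simpa using this
  have hdiag_le : ∀ c : Fin 2, ‖m c c‖ ≤ 1 := by
    intro c
    obtain ⟨hc, hcre⟩ := hdiag_re c
    rw [hc, Complex.norm_of_nonneg hcre]
    have h0' := (hdiag_re 0).2
    have h1' := (hdiag_re 1).2
    fin_cases c <;> simp <;> linarith
  have hherm : m 1 0 = (starRingEnd ℂ) (m 0 1) := by
    have := h.1
    calc m 1 0 = mᴴ 1 0 := by rw [this]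
      _ = (starRingEnd ℂ) (m 0 1) := rfl
  have hoff : ‖m 0 1‖ ≤ 1 := by
    set w := m 0 1 with hw
    by_cases hw0 : w = 0
    · simp [hw0]
    · set r : ℝ := ‖w‖ with hr
      have hrpos : 0 < r := by
        rw [hr]; exact norm_pos_iff.mpr hw0
      have hww : w * (starRingEnd ℂ) w = ((r : ℂ))^2 := by
        rw [Complex.mul_conj, hr]
        norm_cast
        exact (Complex.sq_norm w).symm
      have hq := h.dotProduct_mulVec_nonneg ![-w, (r : ℂ)]
      have e : star (![-w, (r : ℂ)]) ⬝ᵥ (m *ᵥ ![-w, (r : ℂ)])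
          = ((r^2 * (1 - 2*r) : ℝ) : ℂ) := by
        simp only [dotProduct, mulVec, Fin.sum_univ_two, Pi.star_apply, Matrix.cons_val_zero,
          Matrix.cons_val_one, Matrix.head_cons, star_neg, Complex.star_def,
          Complex.conj_ofReal, map_neg]
        rw [hherm, ← hw]
        push_cast
        linear_combination (m 0 0 - 2*(r:ℂ)) * hww + ((r:ℂ)^2) * htr'
      rw [e] at hq
      have hq' : 0 ≤ r^2 * (1 - 2*r) := Complex.real_le_real.mp (by simpa using hq)
      have : r ≤ 1/2 := by nlinarith [mul_pos hrpos hrpos]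
      rw [hr] at this ⊢
      linarith
  intro a b
  fin_cases a <;> fin_cases b <;> dsimp only
  · exact hdiag_le 0
  · exact hoff
  · show ‖m 1 0‖ ≤ 1
    rw [hherm]
    simpa [Complex.norm_conj] using hoff
  · exact hdiag_le 1

lemma isCompact_K : IsCompact {m : Mat2 | m.PosSemidef ∧ m.trace = 1} := by
  have hB : IsCompact (Set.pi Set.univ fun _ : Fin 2 =>
      Set.pi Set.univ fun _ : Fin 2 => Metric.closedBall (0 : ℂ) 1) :=
    isCompact_univ_pi fun _ => isCompact_univ_pi fun _ => isCompact_closedBall _ _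
  refine IsCompact.of_isClosed_subset hB isClosed_K ?_
  intro m hm
  intro a _ b _
  simp only [Metric.mem_closedBall, Complex.dist_eq, sub_zero]
  exact density_entry_bound m hm.1 hm.2 a b

lemma P2_mem_K (v : Fin 2 → ℂ) (hv : star v ⬝ᵥ v = 1) :
    P2 v ∈ {m : Mat2 | m.PosSemidef ∧ m.trace = 1} := by
  constructor
  · refine .of_dotProduct_mulVec_nonneg (P2_herm v) fun y => ?_
    rw [quad_P2]
    have hz : star v ⬝ᵥ y = (starRingEnd ℂ) (star y ⬝ᵥ v) := by
      simp [dotProduct, Fin.sum_univ_two, map_add, _root_.map_mul]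
      ring
    rw [hz, Complex.mul_conj]
    exact_mod_cast Complex.real_le_real.mpr (Complex.normSq_nonneg _)
  · rw [trace_P2, hv]

lemma part1 {n : ℕ} [NeZero n]
    (M : (Fin n → Fin 2) → Matrix (Fin n → Fin 2) (Fin n → Fin 2) ℂ)
    (hM : ∀ s, (M s).IsHermitian)
    (ρ : Fin n → Fin 2 → Fin 2 → Mat2)
    (hρpsd : ∀ j a x, (ρ j a x).PosSemidef)
    (hρtr : ∀ j a x, (ρ j a x).trace = 1) :
    ∃ ψ : Fin n → Fin 2 → Fin 2 → (Fin 2 → ℂ),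
      GoodPsi ψ ∧ Fval M (fun j x => ρ j 0 x - ρ j 1 x) ≤ Fval M (Apure n ψ) := by
  have hdc : Decomp (fun j x => ρ j 0 x - ρ j 1 x) := fun j x =>
    density_diff_decomp _ _ (hρpsd j 0 x) (hρpsd j 1 x) (hρtr j 0 x) (hρtr j 1 x)
  obtain ⟨ψ, hψ, hle⟩ := exists_pure_ge M hM _ hdc Finset.univ
  have hcfg : cfg ψ (fun j x => ρ j 0 x - ρ j 1 x) Finset.univ = Apure n ψ := by
    funext j x
    simp [cfg, Apure, P2]
  exact ⟨ψ, hψ, by rwa [hcfg] at hle⟩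

/-- Appendix B antipodality lemma: for any POVM and any
density-matrix messages, antipodal (pure and orthogonal) messages do at least
as well; consequently, for a fixed POVM the success metric is maximized by
pure antipodal messages. -/
theorem stmt19 (n : ℕ) [NeZero n] (hn : 2 ≤ n)
    (M : (Fin n → Fin 2) → Matrix (Fin n → Fin 2) (Fin n → Fin 2) ℂ)
    (hMpsd : ∀ s, (M s).PosSemidef)
    (hMsum : ∑ s, M s = 1)
    (ρ : Fin n → Fin 2 → Fin 2 → Mat2)
    (hρpsd : ∀ j a x, (ρ j a x).PosSemidef)
    (hρtr : ∀ j a x, (ρ j a x).trace = 1) :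
    (∃ ψ : Fin n → Fin 2 → Fin 2 → (Fin 2 → ℂ),
      (∀ j a x, star (ψ j a x) ⬝ᵥ ψ j a x = 1) ∧
      (∀ j x, star (ψ j 0 x) ⬝ᵥ ψ j 1 x = 0) ∧
      ∑ s, (M s * Wop n (fun j x => ρ j 0 x - ρ j 1 x) s).trace
        ≤ ∑ s, (M s * Wop n (Apure n ψ) s).trace)
    ∧ (∃ ψ : Fin n → Fin 2 → Fin 2 → (Fin 2 → ℂ),
      (∀ j a x, star (ψ j a x) ⬝ᵥ ψ j a x = 1) ∧
      (∀ j x, star (ψ j 0 x) ⬝ᵥ ψ j 1 x = 0) ∧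
      ∀ ρ' : Fin n → Fin 2 → Fin 2 → Mat2,
        (∀ j a x, (ρ' j a x).PosSemidef) → (∀ j a x, (ρ' j a x).trace = 1) →
        ∑ s, (M s * Wop n (fun j x => ρ' j 0 x - ρ' j 1 x) s).trace
          ≤ ∑ s, (M s * Wop n (Apure n ψ) s).trace) := by
  have hM : ∀ s, (M s).IsHermitian := fun s => (hMpsd s).1
  constructor
  · obtain ⟨ψ, hψ, hle⟩ := part1 M hM ρ hρpsd hρtr
    exact ⟨ψ, hψ.1, hψ.2.1, hle⟩
  · -- compactness: maximize over the compact set of density-matrix messages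
    set K : Set Mat2 := {m : Mat2 | m.PosSemidef ∧ m.trace = 1} with hK
    set D : Set (Fin n → Fin 2 → Fin 2 → Mat2) :=
      Set.pi Set.univ fun _ => Set.pi Set.univ fun _ => Set.pi Set.univ fun _ => K with hD
    have hDc : IsCompact D :=
      isCompact_univ_pi fun _ => isCompact_univ_pi fun _ => isCompact_univ_pi fun _ =>
        isCompact_K
    have hDne : D.Nonempty := by
      refine ⟨fun _ _ _ => P2 (stdv 0), ?_⟩
      intro j _ a _ x _
      exact P2_mem_K (stdv 0) (stdv_unit 0)
    have hcont : Continuous fun ρ'' : Fin n → Fin 2 → Fin 2 → Mat2 =>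
        (Fval M (fun j x => ρ'' j 0 x - ρ'' j 1 x)).re :=
      Complex.continuous_re.comp (cont_Fval M _ cont_diff_slots)
    obtain ⟨ρm, hρmD, hmax'⟩ := hDc.exists_isMaxOn hDne hcont.continuousOn
    have hmax : ∀ ρ'' ∈ D, (Fval M (fun j x => ρ'' j 0 x - ρ'' j 1 x)).re
        ≤ (Fval M (fun j x => ρm j 0 x - ρm j 1 x)).re := fun ρ'' h => hmax' h
    have hρmK : ∀ j a x, ρm j a x ∈ K := fun j a x =>
      hρmD j (Set.mem_univ j) a (Set.mem_univ a) x (Set.mem_univ x)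
    obtain ⟨ψ, hψ, hle⟩ := part1 M hM ρm (fun j a x => (hρmK j a x).1)
      (fun j a x => (hρmK j a x).2)
    refine ⟨ψ, hψ.1, hψ.2.1, fun ρ' hpsd' htr' => ?_⟩
    have hρ'D : ρ' ∈ D := fun j _ => fun a _ => fun x _ => ⟨hpsd' j a x, htr' j a x⟩
    have h1 : (Fval M (fun j x => ρ' j 0 x - ρ' j 1 x)).re
        ≤ (Fval M (fun j x => ρm j 0 x - ρm j 1 x)).re := hmax ρ' hρ'D
    have h2 : (Fval M (fun j x => ρm j 0 x - ρm j 1 x)).re ≤ (Fval M (Apure n ψ)).re :=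
      (Complex.le_def.mp hle).1
    obtain ⟨r, hr⟩ := Fval_real M hM (fun j x => ρ' j 0 x - ρ' j 1 x)
      (fun j x => ((hpsd' j 0 x).1).sub ((hpsd' j 1 x).1))
    obtain ⟨r', hr'⟩ := Fval_real M hM (Apure n ψ)
      (fun j x => (P2_herm (ψ j 0 x)).sub (P2_herm (ψ j 1 x)))
    rw [hr] at h1
    rw [hr'] at h2
    simp only [Complex.ofReal_re] at h1 h2
    show Fval M (fun j x => ρ' j 0 x - ρ' j 1 x) ≤ Fval M (Apure n ψ)
    rw [hr, hr', Complex.real_le_real]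
    exact le_trans h1 h2
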